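/- Fix an integer s ≥ 2, an integer t with 1 ≤ t ≤ s−1, and positive integers a_1, …, a_t. Then there is a constant C (depending on s, t, a_1, …, a_t) such that for every integer z ≥ 2, ∑ (x_1 ⋯ x_t)^{−1+1/s} (z − (a_1 x_1 + ⋯ + a_t x_t))^{−2t/s} ≤ C z^{−1/s} log z, where the sum runs over all t-tuples of positive integers (x_1, …, x_t) with a_1 x_1 + ⋯ + a_t x_t < z. -/

import Mathlib

lemma aux_rpow_diff {c : ℝ} (hc0 : 0 < c) (hc1 : c ≤ 1) {x : ℝ} (hx : 1 ≤ x) :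
    c * x ^ (c - 1) ≤ x ^ c - (x - 1) ^ c := by
  have hx0 : 0 < x := lt_of_lt_of_le one_pos hx
  have h1 : (1 : ℝ) + (-1/x) = (x-1)/x := by field_simp; ring
  have hber : ((1:ℝ) + (-1/x)) ^ c ≤ 1 + c * (-1/x) := by
    apply rpow_one_add_le_one_add_mul_self _ hc0.le hc1
    have h3 : 1/x ≤ 1 := by rw [div_le_one hx0]; exact hx
    have h4 : (-1:ℝ)/x = -(1/x) := by ring
    linarith [h3, h4]
  rw [h1, Real.div_rpow (by linarith) hx0.le] at hber
  have hxc : (0:ℝ) < x ^ c := Real.rpow_pos_of_pos hx0 c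
  have hxc' : x ^ (c-1) = x ^ c / x := by
    rw [Real.rpow_sub hx0, Real.rpow_one]
  rw [div_le_iff₀ (Real.rpow_pos_of_pos hx0 c)] at hber
  rw [hxc']
  have h2 : (1 + c * (-1/x)) * x ^ c = x ^ c - c * (x ^ c / x) := by
    field_simp; ring
  nlinarith [hber]


lemma aux_sum_rpow {c : ℝ} (hc0 : 0 < c) (hc1 : c ≤ 1) (N : ℕ) :
    ∑ x ∈ Finset.Icc 1 N, (x : ℝ) ^ (c - 1) ≤ (N : ℝ) ^ c / c := by
  have key : ∀ i : ℕ, ((i+1 : ℕ) : ℝ) ^ (c-1) ≤ (((i+1:ℕ) : ℝ) ^ c - ((i:ℕ) : ℝ) ^ c) / c := by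
    intro i
    rw [le_div_iff₀ hc0]
    have h := aux_rpow_diff hc0 hc1 (x := ((i+1:ℕ):ℝ)) (by exact_mod_cast Nat.le_add_left 1 i)
    have h2 : ((i+1:ℕ):ℝ) - 1 = (i:ℕ) := by push_cast; ring
    rw [h2] at h
    linarith
  have hIcc : ∑ x ∈ Finset.Icc 1 N, (x : ℝ) ^ (c - 1)
      = ∑ i ∈ Finset.range N, ((i+1 : ℕ) : ℝ) ^ (c-1) := by
    rw [← Finset.Ico_add_one_right_eq_Icc, Finset.sum_Ico_eq_sum_range]
    simp [Nat.add_comm]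
  rw [hIcc]
  calc ∑ i ∈ Finset.range N, ((i+1 : ℕ) : ℝ) ^ (c-1)
      ≤ ∑ i ∈ Finset.range N, (((i+1:ℕ) : ℝ) ^ c - ((i:ℕ) : ℝ) ^ c) / c :=
        Finset.sum_le_sum fun i _ => key i
    _ = (∑ i ∈ Finset.range N, (((i+1:ℕ) : ℝ) ^ c - ((i:ℕ) : ℝ) ^ c)) / c := by
        rw [Finset.sum_div]
    _ = ((N:ℝ) ^ c - ((0:ℕ):ℝ) ^ c) / c := by
        rw [Finset.sum_range_sub (f := fun i => ((i:ℕ) : ℝ) ^ c)]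
    _ = (N : ℝ) ^ c / c := by
        norm_num [Real.zero_rpow hc0.ne']


lemma aux_sum_inv (N : ℕ) :
    ∑ x ∈ Finset.Icc 1 N, (x : ℝ) ^ (-1 : ℝ) ≤ 1 + Real.log N := by
  have h1 : ∑ x ∈ Finset.Icc 1 N, (x : ℝ) ^ (-1 : ℝ) = ((harmonic N : ℚ) : ℝ) := by
    rw [harmonic_eq_sum_Icc]
    push_cast
    refine Finset.sum_congr rfl fun x _ => ?_
    rw [Real.rpow_neg_one]
  rw [h1]
  exact harmonic_le_one_add_log N


lemma sum_piFinset_cons {M : Type*} [AddCommMonoid M] {t : ℕ} (S : Finset ℕ)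
    (g : (Fin (t+1) → ℕ) → M) :
    ∑ x ∈ Fintype.piFinset (fun _ : Fin (t+1) => S), g x
      = ∑ y ∈ S, ∑ x ∈ Fintype.piFinset (fun _ : Fin t => S), g (Fin.cons y x) := by
  have h := Finset.filter_piFinset_eq_map_consEquiv (fun _ : Fin (t+1) => S)
      (fun _ => True)
  simp only [Finset.filter_true] at h
  rw [h, Finset.sum_map, Finset.sum_product]
  rfl


lemma aux_sum_shift (b n : ℕ) (hb : 1 ≤ b) (g : ℕ → ℝ) (hg : ∀ m, 0 ≤ g m) :
    ∑ y ∈ (Finset.Icc 1 n).filter (fun y => b * y < n), g (n - b * y)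
      ≤ ∑ m ∈ Finset.Icc 1 n, g m := by
  have hinj : ∀ y1 ∈ (Finset.Icc 1 n).filter (fun y => b * y < n),
      ∀ y2 ∈ (Finset.Icc 1 n).filter (fun y => b * y < n),
      n - b * y1 = n - b * y2 → y1 = y2 := by
    intro y1 h1 y2 h2 heq
    rw [Finset.mem_filter] at h1 h2
    have : b * y1 = b * y2 := by omega
    exact Nat.eq_of_mul_eq_mul_left hb this
  rw [← Finset.sum_image hinj]
  apply Finset.sum_le_sum_of_subset_of_nonneg
  · intro m hm
    rw [Finset.mem_image] at hm
    obtain ⟨y, hy, rfl⟩ := hm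
    rw [Finset.mem_filter] at hy
    rw [Finset.mem_Icc]
    omega
  · intro m _ _
    exact hg m


-- scaled-base bound:  for x ≥ n/(2b), x ≥ 1:  x^(c-1) ≤ 2b * n^(c-1)
lemma aux_scaled (b n : ℕ) (hb : 1 ≤ b) (hn : 1 ≤ n) {c : ℝ} (hc0 : 0 < c) (hc1 : c ≤ 1)
    {x : ℝ} (hx1 : 1 ≤ x) (hx : (n : ℝ) ≤ 2 * b * x) :
    x ^ (c - 1) ≤ 2 * b * (n : ℝ) ^ (c - 1) := by
  have hn0 : (0:ℝ) < n := by exact_mod_cast hn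
  have hb0 : (0:ℝ) < 2 * b := by positivity
  have hq : (0:ℝ) < (n:ℝ) / (2*b) := by positivity
  have h1 : (n:ℝ) / (2*b) ≤ x := by rw [div_le_iff₀ hb0]; linarith
  have h2 : x ^ (c-1) ≤ ((n:ℝ)/(2*b)) ^ (c-1) :=
    Real.rpow_le_rpow_of_nonpos hq h1 (by linarith)
  have h3 : ((n:ℝ)/(2*b)) ^ (c-1) = (n:ℝ)^(c-1) / (2*b:ℝ)^(c-1) :=
    Real.div_rpow hn0.le hb0.le _
  have h4 : (1:ℝ) ≤ (2*b:ℝ) := by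
    have : (1:ℝ) ≤ (b:ℝ) := by exact_mod_cast hb
    linarith
  have h5 : ((2*b:ℝ))^(1-c) ≤ (2*b:ℝ) := by
    calc ((2*b:ℝ))^(1-c) ≤ ((2*b:ℝ))^(1:ℝ) :=
          Real.rpow_le_rpow_of_exponent_le h4 (by linarith)
      _ = 2*b := Real.rpow_one _
  have h6 : (n:ℝ)^(c-1) / (2*b:ℝ)^(c-1) = (2*b:ℝ)^(1-c) * (n:ℝ)^(c-1) := by
    rw [div_eq_mul_inv, ← Real.rpow_neg hb0.le]
    ring_nf
  calc x ^ (c-1) ≤ (n:ℝ)^(c-1) / (2*b:ℝ)^(c-1) := h3 ▸ h2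
    _ = (2*b:ℝ)^(1-c) * (n:ℝ)^(c-1) := h6
    _ ≤ 2*b * (n:ℝ)^(c-1) := by
        have := Real.rpow_nonneg hn0.le (c-1)
        nlinarith

lemma aux_conv (b n : ℕ) (hb : 1 ≤ b) (hn : 1 ≤ n) {c1 c2 : ℝ}
    (h10 : 0 < c1) (h11 : c1 ≤ 1) (h20 : 0 < c2) (h21 : c2 ≤ 1) :
    ∑ y ∈ Finset.Icc 1 n,
        (if b * y < n then (y:ℝ)^(c1-1) * ((n - b*y : ℕ):ℝ)^(c2-1) else 0)
      ≤ (2/c1 + 2*b/c2) * (n:ℝ)^(c1+c2-1) := by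
  have hn0 : (0:ℝ) < n := by exact_mod_cast hn
  have step : ∀ y ∈ Finset.Icc 1 n,
      (if b * y < n then (y:ℝ)^(c1-1) * ((n - b*y : ℕ):ℝ)^(c2-1) else 0)
        ≤ 2*(n:ℝ)^(c2-1)*(y:ℝ)^(c1-1)
          + 2*b*(n:ℝ)^(c1-1) * (if b * y < n then ((n - b*y : ℕ):ℝ)^(c2-1) else 0) := by
    intro y hy
    rw [Finset.mem_Icc] at hy
    have hy1 : (1:ℝ) ≤ (y:ℝ) := by exact_mod_cast hy.1
    by_cases hlt : b * y < n
    · rw [if_pos hlt, if_pos hlt]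
      have hm1 : (1:ℝ) ≤ ((n - b*y : ℕ):ℝ) := by
        have : 1 ≤ n - b*y := by omega
        exact_mod_cast this
      have hmn : ((n - b*y : ℕ):ℝ) = (n:ℝ) - (b:ℝ)*(y:ℝ) := by
        push_cast [Nat.cast_sub hlt.le]; ring
      have hynn : (0:ℝ) ≤ (y:ℝ)^(c1-1) := Real.rpow_nonneg (by linarith) _
      have hmnn : (0:ℝ) ≤ ((n - b*y : ℕ):ℝ)^(c2-1) := Real.rpow_nonneg (by linarith) _
      rcases le_or_gt (n:ℝ) (2*(b:ℝ)*(y:ℝ)) with hcase | hcase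
      · -- y large: y^(c1-1) ≤ 2b n^(c1-1)
        have h := aux_scaled b n hb hn h10 h11 hy1 hcase
        have hnn : (0:ℝ) ≤ 2*(n:ℝ)^(c2-1)*(y:ℝ)^(c1-1) := by positivity
        nlinarith
      · -- m large: m ≥ n/2 : m^(c2-1) ≤ 2*1*n^(c2-1) via aux_scaled with b=1
        have hm : (n:ℝ) ≤ 2 * (1:ℕ) * ((n - b*y : ℕ):ℝ) := by
          rw [hmn]
          push_cast
          have hb1 : (1:ℝ) ≤ (b:ℝ) := by exact_mod_cast hb
          nlinarith
        have h := aux_scaled 1 n le_rfl hn h20 h21 hm1 hm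
        push_cast at h
        have hnn : (0:ℝ) ≤ 2*(b:ℝ)*(n:ℝ)^(c1-1) * ((n - b*y : ℕ):ℝ)^(c2-1) := by positivity
        nlinarith
    · rw [if_neg hlt, if_neg hlt]
      positivity
  calc ∑ y ∈ Finset.Icc 1 n,
      (if b * y < n then (y:ℝ)^(c1-1) * ((n - b*y : ℕ):ℝ)^(c2-1) else 0)
      ≤ ∑ y ∈ Finset.Icc 1 n, (2*(n:ℝ)^(c2-1)*(y:ℝ)^(c1-1)
          + 2*b*(n:ℝ)^(c1-1) * (if b * y < n then ((n - b*y : ℕ):ℝ)^(c2-1) else 0)) :=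
        Finset.sum_le_sum step
    _ = 2*(n:ℝ)^(c2-1) * (∑ y ∈ Finset.Icc 1 n, (y:ℝ)^(c1-1))
        + 2*b*(n:ℝ)^(c1-1) * (∑ y ∈ Finset.Icc 1 n,
            (if b * y < n then ((n - b*y : ℕ):ℝ)^(c2-1) else 0)) := by
        rw [Finset.sum_add_distrib, ← Finset.mul_sum, ← Finset.mul_sum]
    _ ≤ 2*(n:ℝ)^(c2-1) * ((n:ℝ)^c1/c1) + 2*b*(n:ℝ)^(c1-1) * ((n:ℝ)^c2/c2) := by
        gcongr
        · exact aux_sum_rpow h10 h11 n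
        · rw [← Finset.sum_filter]
          calc ∑ y ∈ (Finset.Icc 1 n).filter (fun y => b*y < n), ((n - b*y : ℕ):ℝ)^(c2-1)
              ≤ ∑ m ∈ Finset.Icc 1 n, (m:ℝ)^(c2-1) :=
                aux_sum_shift b n hb (fun m => (m:ℝ)^(c2-1))
                  (fun m => Real.rpow_nonneg (Nat.cast_nonneg _) _)
            _ ≤ (n:ℝ)^c2/c2 := aux_sum_rpow h20 h21 n
    _ = (2/c1 + 2*b/c2) * (n:ℝ)^(c1+c2-1) := by
        rw [show c1+c2-1 = c1 + c2 + (-1) by ring, show c1-1 = c1 + (-1) by ring,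
          show c2-1 = c2 + (-1) by ring, Real.rpow_add hn0, Real.rpow_add hn0,
          Real.rpow_add hn0]
        field_simp
        rw [Real.rpow_add hn0 c1 c2]
        ring


noncomputable def Hsum (s t : ℕ) (a : Fin t → ℕ) (n : ℕ) : ℝ :=
  ∑ x ∈ (Fintype.piFinset fun _ : Fin t => Finset.Icc 1 n).filter
      (fun x => ∑ k, a k * x k = n),
    (∏ k, (x k : ℝ)) ^ (-1 + 1/(s:ℝ))

lemma Hsum_nonneg (s t : ℕ) (a : Fin t → ℕ) (n : ℕ) : 0 ≤ Hsum s t a n := by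
  refine Finset.sum_nonneg fun x _ => Real.rpow_nonneg ?_ _
  exact Finset.prod_nonneg fun k _ => Nat.cast_nonneg _

lemma Hsum_zero_eq (s : ℕ) (a : Fin 0 → ℕ) (m : ℕ) :
    Hsum s 0 a m = if m = 0 then 1 else 0 := by
  unfold Hsum
  rw [Finset.sum_filter]
  rw [Fintype.piFinset_of_isEmpty]
  simp [eq_comm]

lemma Hsum_pos_zero (s t : ℕ) (ht : 1 ≤ t) (a : Fin t → ℕ) : Hsum s t a 0 = 0 := by
  unfold Hsum
  apply Finset.sum_eq_zero
  intro x hx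
  rw [Finset.mem_filter, Fintype.mem_piFinset] at hx
  have := hx.1 ⟨0, ht⟩
  simp [Finset.mem_Icc] at this

lemma Hsum_shrink (s t : ℕ) (a : Fin t → ℕ) (ha : ∀ k, 1 ≤ a k) {m N : ℕ} (h : m ≤ N) :
    ∑ x ∈ (Fintype.piFinset fun _ : Fin t => Finset.Icc 1 N).filter
        (fun x => ∑ k, a k * x k = m),
      (∏ k, (x k : ℝ)) ^ (-1 + 1/(s:ℝ)) = Hsum s t a m := by
  unfold Hsum
  congr 1
  ext x
  simp only [Finset.mem_filter, Fintype.mem_piFinset, Finset.mem_Icc]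
  constructor
  · rintro ⟨h1, h2⟩
    refine ⟨fun k => ⟨(h1 k).1, ?_⟩, h2⟩
    calc x k ≤ a k * x k := Nat.le_mul_of_pos_left _ (ha k)
      _ ≤ ∑ j, a j * x j := Finset.single_le_sum (f := fun j => a j * x j) (fun j _ => Nat.zero_le _) (Finset.mem_univ k)
      _ = m := h2
  · rintro ⟨h1, h2⟩
    exact ⟨fun k => ⟨(h1 k).1, le_trans (h1 k).2 h⟩, h2⟩

lemma Hsum_succ (s t : ℕ) (a : Fin (t+1) → ℕ) (ha : ∀ k, 1 ≤ a k) (n : ℕ) :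
    Hsum s (t+1) a n = ∑ y ∈ Finset.Icc 1 n,
      (if a 0 * y ≤ n then (y:ℝ) ^ (-1 + 1/(s:ℝ)) * Hsum s t (Fin.tail a) (n - a 0 * y) else 0) := by
  have hshr : ∀ y : ℕ, Hsum s t (Fin.tail a) (n - a 0 * y)
      = ∑ x ∈ (Fintype.piFinset fun _ : Fin t => Finset.Icc 1 n).filter
          (fun x => ∑ k, Fin.tail a k * x k = n - a 0 * y),
        (∏ k, (x k : ℝ)) ^ (-1 + 1/(s:ℝ)) := fun y =>
    (Hsum_shrink s t (Fin.tail a) (fun k => ha k.succ) (Nat.sub_le n (a 0 * y))).symm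
  simp only [hshr]
  unfold Hsum
  rw [Finset.sum_filter, sum_piFinset_cons]
  apply Finset.sum_congr rfl
  intro y hy
  by_cases hcase : a 0 * y ≤ n
  · rw [if_pos hcase, Finset.mul_sum, Finset.sum_filter]
    apply Finset.sum_congr rfl
    intro x hx
    have hprod : ∏ k, ((Fin.cons y x : Fin (t+1) → ℕ) k : ℝ) = (y:ℝ) * ∏ k, (x k : ℝ) := by
      rw [Fin.prod_univ_succ]; simp [Fin.cons_succ]
    have hsum : ∑ k, a k * (Fin.cons y x : Fin (t+1) → ℕ) k
        = a 0 * y + ∑ k, Fin.tail a k * x k := by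
      rw [Fin.sum_univ_succ]; simp [Fin.cons_succ, Fin.tail]
    rw [hsum]
    by_cases hc2 : ∑ k, Fin.tail a k * x k = n - a 0 * y
    · rw [if_pos (by omega), if_pos hc2, hprod,
        Real.mul_rpow (by positivity) (by positivity)]
    · rw [if_neg (by omega), if_neg hc2]
  · rw [if_neg hcase]
    apply Finset.sum_eq_zero; intro x hx
    rw [if_neg]
    intro hcon
    rw [Fin.sum_univ_succ] at hcon
    simp only [Fin.cons_zero] at hcon
    omega

lemma Hsum_bound (s : ℕ) (hs : 2 ≤ s) :
    ∀ t : ℕ, 1 ≤ t → t ≤ s - 1 → ∀ a : Fin t → ℕ, (∀ k, 1 ≤ a k) →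
    ∃ C : ℝ, 0 < C ∧ ∀ n : ℕ, 1 ≤ n → Hsum s t a n ≤ C * (n:ℝ) ^ ((t:ℝ)/(s:ℝ) - 1) := by
  have hs0 : (0:ℝ) < (s:ℝ) := by exact_mod_cast Nat.lt_of_lt_of_le Nat.zero_lt_two hs
  intro t ht
  induction t, ht using Nat.le_induction with
  | base =>
    intro _ a ha
    refine ⟨(a 0 : ℝ), by exact_mod_cast ha 0, fun n hn => ?_⟩
    have ha0 : (1:ℝ) ≤ (a 0 : ℝ) := by exact_mod_cast ha 0
    have hn0 : (0:ℝ) < (n:ℝ) := by exact_mod_cast hn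
    rw [Hsum_succ s 0 a ha n]
    have hterm : ∀ y ∈ Finset.Icc 1 n,
        (if a 0 * y ≤ n then (y:ℝ) ^ (-1 + 1/(s:ℝ)) * Hsum s 0 (Fin.tail a) (n - a 0 * y) else 0)
          ≤ (if y = n / a 0 then (a 0 : ℝ) * (n:ℝ) ^ ((1:ℝ)/(s:ℝ) - 1) else 0) := by
      intro y hy
      rw [Finset.mem_Icc] at hy
      have hbound_nonneg : (0:ℝ) ≤ (a 0 : ℝ) * (n:ℝ) ^ ((1:ℝ)/(s:ℝ) - 1) := by positivity
      by_cases h1 : a 0 * y ≤ n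
      · rw [if_pos h1, Hsum_zero_eq]
        by_cases h2 : n - a 0 * y = 0
        · have heq : a 0 * y = n := by
            have := ha 0
            omega
          rw [if_pos h2, mul_one, if_pos]
          · have ha0' : (0:ℝ) < (a 0 : ℝ) := by linarith
            have hyv : (a 0:ℝ) * (y:ℝ) = (n:ℝ) := by exact_mod_cast heq
            have hyval : (y:ℝ) = (n:ℝ) / (a 0 : ℝ) := by
              rw [eq_div_iff (ne_of_gt ha0')]; linarith
            rw [hyval, Real.div_rpow hn0.le ha0'.le _,
              div_le_iff₀ (Real.rpow_pos_of_pos ha0' _),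
              show (1:ℝ)/(s:ℝ) - 1 = -1 + 1/(s:ℝ) by ring]
            have h3 : (a 0:ℝ) ^ ((1:ℝ) + (-1 + 1/(s:ℝ)))
                = (a 0:ℝ) ^ (1:ℝ) * (a 0:ℝ) ^ (-1 + 1/(s:ℝ)) := Real.rpow_add ha0' _ _
            have h5 : (1:ℝ) ≤ (a 0:ℝ) ^ ((1:ℝ) + (-1 + 1/(s:ℝ))) :=
              Real.one_le_rpow ha0 (by rw [show (1:ℝ) + (-1 + 1/(s:ℝ)) = 1/(s:ℝ) by ring]; positivity)
            rw [h3, Real.rpow_one] at h5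
            nlinarith [Real.rpow_pos_of_pos hn0 (-1 + 1/(s:ℝ))]
          · rw [← heq, Nat.mul_div_cancel_left y (ha 0)]
        · rw [if_neg h2, mul_zero]
          split <;> [exact hbound_nonneg; exact le_rfl]
      · rw [if_neg h1]
        split <;> [exact hbound_nonneg; exact le_rfl]
    calc ∑ y ∈ Finset.Icc 1 n,
        (if a 0 * y ≤ n then (y:ℝ) ^ (-1 + 1/(s:ℝ)) * Hsum s 0 (Fin.tail a) (n - a 0 * y) else 0)
        ≤ ∑ y ∈ Finset.Icc 1 n,
            (if y = n / a 0 then (a 0 : ℝ) * (n:ℝ) ^ ((1:ℝ)/(s:ℝ) - 1) else 0) :=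
          Finset.sum_le_sum hterm
      _ ≤ (a 0 : ℝ) * (n:ℝ) ^ ((1:ℝ)/(s:ℝ) - 1) := by
          rw [Finset.sum_ite_eq' (Finset.Icc 1 n)]
          split <;> [exact le_rfl; positivity]
      _ = (a 0 : ℝ) * (n:ℝ) ^ (((1:ℕ):ℝ)/(s:ℝ) - 1) := by norm_num
  | succ t ht IH =>
    intro hts a ha
    have hts' : t ≤ s - 1 := by omega
    obtain ⟨C, hC, hIH⟩ := IH hts' (Fin.tail a) (fun k => ha k.succ)
    have ha0 : 1 ≤ a 0 := ha 0
    have hc1 : (0:ℝ) < 1/(s:ℝ) := by positivity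
    have hc1' : (1:ℝ)/(s:ℝ) ≤ 1 := by
      rw [div_le_one hs0]; exact_mod_cast Nat.le_trans (by norm_num) hs
    have hc2 : (0:ℝ) < (t:ℝ)/(s:ℝ) := by
      apply div_pos _ hs0
      exact_mod_cast ht
    have hc2' : (t:ℝ)/(s:ℝ) ≤ 1 := by
      rw [div_le_one hs0]
      exact_mod_cast Nat.le_of_lt_succ (by omega : t < s + 1)
    refine ⟨C * (2/((1:ℝ)/(s:ℝ)) + 2*(a 0)/((t:ℝ)/(s:ℝ))), by positivity, fun n hn => ?_⟩
    rw [Hsum_succ s t a ha n]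
    have hterm : ∀ y ∈ Finset.Icc 1 n,
        (if a 0 * y ≤ n then (y:ℝ) ^ (-1 + 1/(s:ℝ)) * Hsum s t (Fin.tail a) (n - a 0 * y) else 0)
          ≤ C * (if a 0 * y < n
              then (y:ℝ) ^ ((1:ℝ)/(s:ℝ) - 1) * ((n - a 0 * y : ℕ):ℝ) ^ ((t:ℝ)/(s:ℝ) - 1)
              else 0) := by
      intro y hy
      rw [Finset.mem_Icc] at hy
      have hynn : (0:ℝ) ≤ (y:ℝ) ^ (-1 + 1/(s:ℝ)) := Real.rpow_nonneg (by positivity) _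
      by_cases h1 : a 0 * y < n
      · rw [if_pos h1.le, if_pos h1]
        have := hIH (n - a 0 * y) (by omega)
        calc (y:ℝ) ^ (-1 + 1/(s:ℝ)) * Hsum s t (Fin.tail a) (n - a 0 * y)
            ≤ (y:ℝ) ^ (-1 + 1/(s:ℝ)) * (C * ((n - a 0 * y : ℕ):ℝ) ^ ((t:ℝ)/(s:ℝ) - 1)) := by
              apply mul_le_mul_of_nonneg_left this hynn
          _ = C * ((y:ℝ) ^ ((1:ℝ)/(s:ℝ) - 1) * ((n - a 0 * y : ℕ):ℝ) ^ ((t:ℝ)/(s:ℝ) - 1)) := by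
              rw [show (-1:ℝ) + 1/(s:ℝ) = 1/(s:ℝ) - 1 by ring]; ring
      · rw [if_neg h1]
        by_cases h2 : a 0 * y ≤ n
        · have h3 : a 0 * y = n := by omega
          rw [if_pos h2, h3, Nat.sub_self, Hsum_pos_zero s t ht (Fin.tail a), mul_zero, mul_zero]
        · rw [if_neg h2, mul_zero]
    calc ∑ y ∈ Finset.Icc 1 n,
        (if a 0 * y ≤ n then (y:ℝ) ^ (-1 + 1/(s:ℝ)) * Hsum s t (Fin.tail a) (n - a 0 * y) else 0)
        ≤ ∑ y ∈ Finset.Icc 1 n, C * (if a 0 * y < n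
            then (y:ℝ) ^ ((1:ℝ)/(s:ℝ) - 1) * ((n - a 0 * y : ℕ):ℝ) ^ ((t:ℝ)/(s:ℝ) - 1)
            else 0) := Finset.sum_le_sum hterm
      _ = C * ∑ y ∈ Finset.Icc 1 n, (if a 0 * y < n
            then (y:ℝ) ^ ((1:ℝ)/(s:ℝ) - 1) * ((n - a 0 * y : ℕ):ℝ) ^ ((t:ℝ)/(s:ℝ) - 1)
            else 0) := by rw [Finset.mul_sum]
      _ ≤ C * ((2/((1:ℝ)/(s:ℝ)) + 2*(a 0)/((t:ℝ)/(s:ℝ))) * (n:ℝ) ^ ((1:ℝ)/(s:ℝ) + (t:ℝ)/(s:ℝ) - 1)) := by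
          apply mul_le_mul_of_nonneg_left _ hC.le
          exact aux_conv (a 0) n ha0 hn hc1 hc1' hc2 hc2'
      _ = C * (2/((1:ℝ)/(s:ℝ)) + 2*(a 0)/((t:ℝ)/(s:ℝ))) * (n:ℝ) ^ (((t+1:ℕ):ℝ)/(s:ℝ) - 1) := by
          rw [show ((t+1:ℕ):ℝ)/(s:ℝ) - 1 = (1:ℝ)/(s:ℝ) + (t:ℝ)/(s:ℝ) - 1 by push_cast; ring]
          ring


-- for exponents in [-2, 0]
lemma aux_scaled2 (n : ℕ) (hn : 1 ≤ n) {E : ℝ} (hE1 : -2 ≤ E) (hE0 : E ≤ 0)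
    {x : ℝ} (hx0 : 0 < x) (hx : (n : ℝ) ≤ 2 * x) :
    x ^ E ≤ 4 * (n : ℝ) ^ E := by
  have hn0 : (0:ℝ) < n := by exact_mod_cast hn
  have hq : (0:ℝ) < (n:ℝ) / 2 := by positivity
  have h2 : x ^ E ≤ ((n:ℝ)/2) ^ E :=
    Real.rpow_le_rpow_of_nonpos hq (by linarith) hE0
  have h3 : ((n:ℝ)/2) ^ E = (n:ℝ)^E / (2:ℝ)^E := Real.div_rpow hn0.le (by norm_num) _
  have h4 : (n:ℝ)^E / (2:ℝ)^E = (2:ℝ)^(-E) * (n:ℝ)^E := by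
    rw [div_eq_mul_inv, ← Real.rpow_neg (by norm_num : (0:ℝ) ≤ 2)]
    ring
  have h5 : (2:ℝ)^(-E) ≤ 4 := by
    calc (2:ℝ)^(-E) ≤ (2:ℝ)^(2:ℝ) :=
          Real.rpow_le_rpow_of_exponent_le (by norm_num) (by linarith)
      _ = 4 := by
          rw [show (2:ℝ) = ((2:ℕ):ℝ) by norm_num, Real.rpow_natCast]
          norm_num
  have h6 : (0:ℝ) ≤ (n:ℝ)^E := Real.rpow_nonneg hn0.le _
  calc x ^ E ≤ (n:ℝ)^E / (2:ℝ)^E := h3 ▸ h2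
    _ = (2:ℝ)^(-E) * (n:ℝ)^E := h4
    _ ≤ 4 * (n:ℝ)^E := by nlinarith

lemma final_conv (s t z : ℕ) (hs : 2 ≤ s) (ht1 : 1 ≤ t) (hts : t ≤ s - 1) (hz : 2 ≤ z) :
    ∑ n ∈ Finset.Ico 1 z,
        ((z - n : ℕ):ℝ) ^ (-(2*(t:ℝ))/(s:ℝ)) * (n:ℝ) ^ ((t:ℝ)/(s:ℝ) - 1)
      ≤ 2*(z:ℝ)^(-(1:ℝ)/(s:ℝ))*(1+Real.log z)
        + (4*(s:ℝ)/(t:ℝ))*(z:ℝ)^(-(1:ℝ)/(s:ℝ)) := by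
  have hs0 : (0:ℝ) < (s:ℝ) := by exact_mod_cast Nat.lt_of_lt_of_le Nat.zero_lt_two hs
  have ht0 : (0:ℝ) < (t:ℝ) := by exact_mod_cast ht1
  have hts' : (t:ℝ) ≤ (s:ℝ) - 1 := by
    have : t + 1 ≤ s := by omega
    have := (Nat.cast_le (α := ℝ)).2 this
    push_cast at this
    linarith
  have hz0 : (0:ℝ) < (z:ℝ) := by exact_mod_cast Nat.lt_of_lt_of_le Nat.zero_lt_two hz
  have hz1 : (1:ℝ) ≤ (z:ℝ) := by exact_mod_cast Nat.le_trans (by norm_num) hz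
  set γe : ℝ := -(2*(t:ℝ))/(s:ℝ) with hγe
  set c2 : ℝ := (t:ℝ)/(s:ℝ) with hc2def
  have hc2 : 0 < c2 := div_pos ht0 hs0
  have hc2' : c2 ≤ 1 := by
    rw [hc2def, div_le_one hs0]; linarith
  have hγe0 : γe ≤ 0 := by
    rw [hγe]
    apply div_nonpos_of_nonpos_of_nonneg <;> linarith
  have hγe2 : -2 ≤ γe := by
    rw [hγe, neg_div, neg_le_neg_iff, div_le_iff₀ hs0]
    linarith
  have hzc2 : (0:ℝ) ≤ (z:ℝ)^(c2-1) := Real.rpow_nonneg hz0.le _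
  have hzγe : (0:ℝ) ≤ (z:ℝ)^γe := Real.rpow_nonneg hz0.le _
  -- termwise split
  have step : ∀ n ∈ Finset.Ico 1 z,
      ((z - n : ℕ):ℝ) ^ γe * (n:ℝ) ^ (c2 - 1)
        ≤ 2*(z:ℝ)^(c2-1) * ((z - n : ℕ):ℝ) ^ γe + 4*(z:ℝ)^γe * (n:ℝ)^(c2-1) := by
    intro n hn
    rw [Finset.mem_Ico] at hn
    have hn1 : (1:ℝ) ≤ (n:ℝ) := by exact_mod_cast hn.1
    have hm1 : 1 ≤ z - n := by omega
    have hm1' : (1:ℝ) ≤ ((z - n : ℕ):ℝ) := by exact_mod_cast hm1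
    have hmnn : (0:ℝ) ≤ ((z - n : ℕ):ℝ)^γe := Real.rpow_nonneg (by linarith) _
    have hnnn : (0:ℝ) ≤ (n:ℝ)^(c2-1) := Real.rpow_nonneg (by linarith) _
    rcases le_or_gt (z:ℝ) (2*(n:ℝ)) with hcase | hcase
    · have h := aux_scaled 1 z le_rfl (by omega) hc2 hc2' hn1 (by push_cast; linarith)
      push_cast at h
      nlinarith
    · have hmz : (z:ℝ) ≤ 2 * ((z - n : ℕ):ℝ) := by
        have : ((z - n : ℕ):ℝ) = (z:ℝ) - (n:ℝ) := by
          push_cast [Nat.cast_sub hn.2.le]; ring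
        rw [this]; linarith
      have h := aux_scaled2 z (by omega) hγe2 hγe0 (by linarith : (0:ℝ) < ((z - n:ℕ):ℝ)) hmz
      nlinarith
  calc ∑ n ∈ Finset.Ico 1 z, ((z - n : ℕ):ℝ) ^ γe * (n:ℝ) ^ (c2 - 1)
      ≤ ∑ n ∈ Finset.Ico 1 z,
          (2*(z:ℝ)^(c2-1) * ((z - n : ℕ):ℝ) ^ γe + 4*(z:ℝ)^γe * (n:ℝ)^(c2-1)) :=
        Finset.sum_le_sum step
    _ = 2*(z:ℝ)^(c2-1) * (∑ n ∈ Finset.Ico 1 z, ((z - n : ℕ):ℝ) ^ γe)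
        + 4*(z:ℝ)^γe * (∑ n ∈ Finset.Ico 1 z, (n:ℝ)^(c2-1)) := by
        rw [Finset.sum_add_distrib, ← Finset.mul_sum, ← Finset.mul_sum]
    _ ≤ 2*((z:ℝ)^(c2-1) * (∑ m ∈ Finset.Icc 1 z, (m:ℝ)^γe))
        + 4*(z:ℝ)^γe * ((z:ℝ)^c2/c2) := by
        have hshift : ∑ n ∈ Finset.Ico 1 z, ((z - n : ℕ):ℝ) ^ γe
            ≤ ∑ m ∈ Finset.Icc 1 z, (m:ℝ)^γe := by
          have hIco : Finset.Ico 1 z = (Finset.Icc 1 z).filter (fun y => 1 * y < z) := by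
            ext y
            simp only [Finset.mem_Ico, Finset.mem_filter, Finset.mem_Icc, one_mul]
            omega
          rw [hIco]
          have := aux_sum_shift 1 z le_rfl (fun m => (m:ℝ)^γe)
            (fun m => Real.rpow_nonneg (Nat.cast_nonneg _) _)
          simpa using this
        have hsum2 : ∑ n ∈ Finset.Ico 1 z, (n:ℝ)^(c2-1) ≤ (z:ℝ)^c2/c2 := by
          calc ∑ n ∈ Finset.Ico 1 z, (n:ℝ)^(c2-1)
              ≤ ∑ n ∈ Finset.Icc 1 z, (n:ℝ)^(c2-1) := by
                apply Finset.sum_le_sum_of_subset_of_nonneg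
                · intro m hm
                  rw [Finset.mem_Ico] at hm
                  rw [Finset.mem_Icc]
                  omega
                · intro m _ _
                  exact Real.rpow_nonneg (Nat.cast_nonneg _) _
            _ ≤ (z:ℝ)^c2/c2 := aux_sum_rpow hc2 hc2' z
        rw [mul_assoc]
        gcongr
    _ ≤ 2*((z:ℝ)^(-(1:ℝ)/(s:ℝ)) * (1+Real.log z))
        + (4*(s:ℝ)/(t:ℝ))*(z:ℝ)^(-(1:ℝ)/(s:ℝ)) := by
        have hlogz : (0:ℝ) ≤ Real.log z := Real.log_nonneg hz1
        have hpart1 : (z:ℝ)^(c2-1) * (∑ m ∈ Finset.Icc 1 z, (m:ℝ)^γe)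
            ≤ (z:ℝ)^(-(1:ℝ)/(s:ℝ)) * (1+Real.log z) := by
          rcases le_or_gt (2*(t:ℝ)) (s:ℝ) with hcase | hcase
          · have hγe1 : 0 ≤ γe + 1 := by
              rw [hγe, neg_div]
              have : 2*(t:ℝ)/(s:ℝ) ≤ 1 := by rw [div_le_one hs0]; linarith
              linarith
            have hterm : ∀ m ∈ Finset.Icc 1 z, (m:ℝ)^γe ≤ (z:ℝ)^(γe+1) * (m:ℝ)^(-1:ℝ) := by
              intro m hm
              rw [Finset.mem_Icc] at hm
              have hm0 : (0:ℝ) < (m:ℝ) := by exact_mod_cast hm.1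
              have hmz : (m:ℝ) ≤ (z:ℝ) := by exact_mod_cast hm.2
              calc (m:ℝ)^γe = (m:ℝ)^(γe+1) * (m:ℝ)^(-1:ℝ) := by
                    rw [← Real.rpow_add hm0]; ring_nf
                _ ≤ (z:ℝ)^(γe+1) * (m:ℝ)^(-1:ℝ) := by
                    apply mul_le_mul_of_nonneg_right
                      (Real.rpow_le_rpow hm0.le hmz hγe1)
                      (Real.rpow_nonneg hm0.le _)
            calc (z:ℝ)^(c2-1) * (∑ m ∈ Finset.Icc 1 z, (m:ℝ)^γe)
                ≤ (z:ℝ)^(c2-1) * (∑ m ∈ Finset.Icc 1 z, (z:ℝ)^(γe+1) * (m:ℝ)^(-1:ℝ)) :=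
                  mul_le_mul_of_nonneg_left (Finset.sum_le_sum hterm) hzc2
              _ = (z:ℝ)^(c2-1) * ((z:ℝ)^(γe+1) * ∑ m ∈ Finset.Icc 1 z, (m:ℝ)^(-1:ℝ)) := by
                  rw [← Finset.mul_sum]
              _ ≤ (z:ℝ)^(c2-1) * ((z:ℝ)^(γe+1) * (1+Real.log z)) := by
                  have h1 : (0:ℝ) ≤ (z:ℝ)^(γe+1) := Real.rpow_nonneg hz0.le _
                  exact mul_le_mul_of_nonneg_left
                    (mul_le_mul_of_nonneg_left (aux_sum_inv z) h1) hzc2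
              _ = (z:ℝ)^(c2-1+(γe+1)) * (1+Real.log z) := by
                  rw [Real.rpow_add hz0 (c2-1) (γe+1)]; ring
              _ ≤ (z:ℝ)^(-(1:ℝ)/(s:ℝ)) * (1+Real.log z) := by
                  apply mul_le_mul_of_nonneg_right _ (by linarith)
                  apply Real.rpow_le_rpow_of_exponent_le hz1
                  have e1 : c2 - 1 + (γe + 1) = (-(t:ℝ))/(s:ℝ) := by
                    rw [hc2def, hγe]; ring
                  have h5 : (1:ℝ)/(s:ℝ) ≤ (t:ℝ)/(s:ℝ) := by
                    gcongr
                    exact_mod_cast ht1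
                  have h6 : (-(t:ℝ))/(s:ℝ) = -((t:ℝ)/(s:ℝ)) := neg_div _ _
                  have h7 : (-(1:ℝ))/(s:ℝ) = -((1:ℝ)/(s:ℝ)) := neg_div _ _
                  rw [e1]
                  linarith
          · have hγe1 : γe ≤ -1 := by
              rw [hγe, neg_div]
              have : 1 ≤ 2*(t:ℝ)/(s:ℝ) := by rw [le_div_iff₀ hs0]; linarith
              linarith
            have hterm : ∀ m ∈ Finset.Icc 1 z, (m:ℝ)^γe ≤ (m:ℝ)^(-1:ℝ) := by
              intro m hm
              rw [Finset.mem_Icc] at hm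
              have hm1 : (1:ℝ) ≤ (m:ℝ) := by exact_mod_cast hm.1
              exact Real.rpow_le_rpow_of_exponent_le hm1 hγe1
            calc (z:ℝ)^(c2-1) * (∑ m ∈ Finset.Icc 1 z, (m:ℝ)^γe)
                ≤ (z:ℝ)^(c2-1) * (1+Real.log z) := by
                  apply mul_le_mul_of_nonneg_left _ hzc2
                  exact le_trans (Finset.sum_le_sum hterm) (aux_sum_inv z)
              _ ≤ (z:ℝ)^(-(1:ℝ)/(s:ℝ)) * (1+Real.log z) := by
                  apply mul_le_mul_of_nonneg_right _ (by linarith)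
                  apply Real.rpow_le_rpow_of_exponent_le hz1
                  have h2 : ((t:ℝ)+1)/(s:ℝ) ≤ 1 := by
                    rw [div_le_one hs0]; linarith
                  have h3 : (t:ℝ)/(s:ℝ) + 1/(s:ℝ) = ((t:ℝ)+1)/(s:ℝ) := (add_div _ _ _).symm
                  have h7 : (-(1:ℝ))/(s:ℝ) = -((1:ℝ)/(s:ℝ)) := neg_div _ _
                  rw [hc2def]
                  linarith
        have hpart2 : 4*(z:ℝ)^γe * ((z:ℝ)^c2/c2)
            ≤ (4*(s:ℝ)/(t:ℝ))*(z:ℝ)^(-(1:ℝ)/(s:ℝ)) := by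
          have he : (z:ℝ)^γe * (z:ℝ)^c2 = (z:ℝ)^(γe+c2) := (Real.rpow_add hz0 _ _).symm
          have hle : (z:ℝ)^(γe+c2) ≤ (z:ℝ)^(-(1:ℝ)/(s:ℝ)) := by
            apply Real.rpow_le_rpow_of_exponent_le hz1
            have e3 : γe + c2 = (-(t:ℝ))/(s:ℝ) := by
              rw [hγe, hc2def]; ring
            have h5 : (1:ℝ)/(s:ℝ) ≤ (t:ℝ)/(s:ℝ) := by
              gcongr
              exact_mod_cast ht1
            have h6 : (-(t:ℝ))/(s:ℝ) = -((t:ℝ)/(s:ℝ)) := neg_div _ _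
            have h7 : (-(1:ℝ))/(s:ℝ) = -((1:ℝ)/(s:ℝ)) := neg_div _ _
            rw [e3]
            linarith
          calc 4*(z:ℝ)^γe * ((z:ℝ)^c2/c2) = (4/c2) * ((z:ℝ)^γe * (z:ℝ)^c2) := by ring
            _ = (4/c2) * (z:ℝ)^(γe+c2) := by rw [he]
            _ ≤ (4/c2) * (z:ℝ)^(-(1:ℝ)/(s:ℝ)) := by
                apply mul_le_mul_of_nonneg_left hle (by positivity)
            _ = (4*(s:ℝ)/(t:ℝ))*(z:ℝ)^(-(1:ℝ)/(s:ℝ)) := by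
                rw [hc2def, div_div_eq_mul_div]
        linarith
    _ = 2*(z:ℝ)^(-(1:ℝ)/(s:ℝ))*(1+Real.log z)
        + (4*(s:ℝ)/(t:ℝ))*(z:ℝ)^(-(1:ℝ)/(s:ℝ)) := by ring

lemma fiber_decomp (s t z : ℕ) (a : Fin t → ℕ) (ha : ∀ k, 1 ≤ a k) :
    ∑ x ∈ (Fintype.piFinset fun _ : Fin t => Finset.Icc 1 z).filter
          (fun x => ∑ k, a k * x k < z),
        (∏ k, (x k : ℝ)) ^ (-1 + 1 / (s : ℝ)) *
          ((z : ℝ) - ∑ k, (a k : ℝ) * (x k : ℝ)) ^ (-(2 * (t : ℝ)) / (s : ℝ))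
    = ∑ n ∈ Finset.range z,
        ((z:ℝ) - (n:ℝ)) ^ (-(2 * (t : ℝ)) / (s : ℝ)) * Hsum s t a n := by
  rw [← Finset.sum_fiberwise_of_maps_to (g := fun x => ∑ k, a k * x k)
    (t := Finset.range z) (fun x hx => by
      rw [Finset.mem_filter] at hx
      exact Finset.mem_range.2 hx.2)]
  apply Finset.sum_congr rfl
  intro n hn
  rw [Finset.mem_range] at hn
  have hset : ((Fintype.piFinset fun _ : Fin t => Finset.Icc 1 z).filter
        (fun x => ∑ k, a k * x k < z)).filter (fun x => ∑ k, a k * x k = n)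
      = (Fintype.piFinset fun _ : Fin t => Finset.Icc 1 z).filter
        (fun x => ∑ k, a k * x k = n) := by
    rw [Finset.filter_filter]
    apply Finset.filter_congr
    intro x _
    constructor
    · rintro ⟨_, h2⟩; exact h2
    · intro h2; exact ⟨by omega, h2⟩
  rw [hset]
  have hcongr : ∀ x ∈ (Fintype.piFinset fun _ : Fin t => Finset.Icc 1 z).filter
        (fun x => ∑ k, a k * x k = n),
      (∏ k, (x k : ℝ)) ^ (-1 + 1 / (s : ℝ)) *
          ((z : ℝ) - ∑ k, (a k : ℝ) * (x k : ℝ)) ^ (-(2 * (t : ℝ)) / (s : ℝ))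
        = (∏ k, (x k : ℝ)) ^ (-1 + 1 / (s : ℝ)) *
          ((z:ℝ) - (n:ℝ)) ^ (-(2 * (t : ℝ)) / (s : ℝ)) := by
    intro x hx
    rw [Finset.mem_filter] at hx
    have : ∑ k, (a k : ℝ) * (x k : ℝ) = (n:ℝ) := by
      rw [← hx.2]
      push_cast
      rfl
    rw [this]
  rw [Finset.sum_congr rfl hcongr, ← Finset.sum_mul,
    Hsum_shrink s t a ha (le_of_lt hn), mul_comm]


open Filter

/-- Lemma (technical, part ii): for `1 ≤ t ≤ s − 1` and positive integers `a 1, …, a t`,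
`∑_{a·x < z, x positive} (x 1 ⋯ x t)^{−1+1/s} (z − a·x)^{−2t/s} ≤ C z^{−1/s} log z`
for all `z ≥ 2`. -/
theorem sum_over_linear_sublevel_set (s t : ℕ) (hs : 2 ≤ s) (ht1 : 1 ≤ t) (hts : t ≤ s - 1)
    (a : Fin t → ℕ) (ha : ∀ k, 1 ≤ a k) :
    ∃ C : ℝ, 0 < C ∧ ∀ z : ℕ, 2 ≤ z →
      ∑ x ∈ (Fintype.piFinset fun _ : Fin t => Finset.Icc 1 z).filter
            (fun x => ∑ k, a k * x k < z),
          (∏ k, (x k : ℝ)) ^ (-1 + 1 / (s : ℝ)) *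
            ((z : ℝ) - ∑ k, (a k : ℝ) * (x k : ℝ)) ^ (-(2 * (t : ℝ)) / (s : ℝ))
        ≤ C * (z : ℝ) ^ (-(1 : ℝ) / (s : ℝ)) * Real.log z := by
  obtain ⟨C, hC, hH⟩ := Hsum_bound s hs t ht1 hts a ha
  have hlog2 : (0:ℝ) < Real.log 2 := Real.log_pos (by norm_num)
  have ht0 : (0:ℝ) < (t:ℝ) := by exact_mod_cast ht1
  have hs0 : (0:ℝ) < (s:ℝ) := by exact_mod_cast Nat.lt_of_lt_of_le Nat.zero_lt_two hs
  refine ⟨C * (2*(1/Real.log 2 + 1) + (4*(s:ℝ)/(t:ℝ))*(1/Real.log 2)),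
    by positivity, fun z hz => ?_⟩
  have hz0 : 0 < z := by omega
  have hz1 : (1:ℝ) ≤ (z:ℝ) := by exact_mod_cast Nat.le_trans (by norm_num) hz
  have hzpos : (0:ℝ) ≤ (z:ℝ)^(-(1:ℝ)/(s:ℝ)) := Real.rpow_nonneg (by positivity) _
  have hlogz : Real.log 2 ≤ Real.log z := Real.log_le_log (by norm_num) (by exact_mod_cast hz)
  have hinv : (1/Real.log 2) * Real.log 2 = 1 := by field_simp
  have k2 : (1:ℝ) ≤ (1/Real.log 2) * Real.log z := by
    have h := mul_le_mul_of_nonneg_left hlogz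
      (le_of_lt (by positivity : (0:ℝ) < 1/Real.log 2))
    linarith [hinv, h]
  have k1 : 1 + Real.log z ≤ (1/Real.log 2 + 1) * Real.log z := by
    have : (1/Real.log 2 + 1) * Real.log z
        = (1/Real.log 2) * Real.log z + Real.log z := by ring
    linarith [k2]
  rw [fiber_decomp s t z a ha]
  rw [Finset.range_eq_Ico, Finset.sum_eq_sum_Ico_succ_bot hz0]
  rw [Nat.cast_zero, Hsum_pos_zero s t ht1 a, mul_zero, zero_add]
  calc ∑ n ∈ Finset.Ico (0+1) z, ((z:ℝ) - (n:ℝ))^(-(2*(t:ℝ))/(s:ℝ)) * Hsum s t a n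
      ≤ ∑ n ∈ Finset.Ico 1 z,
          ((z - n:ℕ):ℝ)^(-(2*(t:ℝ))/(s:ℝ)) * (C * (n:ℝ)^((t:ℝ)/(s:ℝ) - 1)) := by
        apply Finset.sum_le_sum
        intro n hn
        rw [Finset.mem_Ico] at hn
        have hcast : ((z - n:ℕ):ℝ) = (z:ℝ) - (n:ℝ) := by
          push_cast [Nat.cast_sub hn.2.le]; ring
        rw [hcast]
        apply mul_le_mul_of_nonneg_left (hH n hn.1)
        apply Real.rpow_nonneg
        have : (n:ℝ) ≤ (z:ℝ) := by exact_mod_cast hn.2.le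
        linarith
    _ = C * ∑ n ∈ Finset.Ico 1 z,
          ((z - n:ℕ):ℝ)^(-(2*(t:ℝ))/(s:ℝ)) * (n:ℝ)^((t:ℝ)/(s:ℝ) - 1) := by
        rw [Finset.mul_sum]
        apply Finset.sum_congr rfl
        intros; ring
    _ ≤ C * (2*(z:ℝ)^(-(1:ℝ)/(s:ℝ))*(1+Real.log z)
          + (4*(s:ℝ)/(t:ℝ))*(z:ℝ)^(-(1:ℝ)/(s:ℝ))) :=
        mul_le_mul_of_nonneg_left (final_conv s t z hs ht1 hts hz) hC.le
    _ ≤ C * ((2*(1/Real.log 2 + 1))*((z:ℝ)^(-(1:ℝ)/(s:ℝ))*Real.log z)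
          + ((4*(s:ℝ)/(t:ℝ))*(1/Real.log 2))*((z:ℝ)^(-(1:ℝ)/(s:ℝ))*Real.log z)) := by
        apply mul_le_mul_of_nonneg_left _ hC.le
        apply add_le_add
        · nlinarith [mul_le_mul_of_nonneg_left k1 hzpos]
        · have hB : (0:ℝ) ≤ (4*(s:ℝ)/(t:ℝ))*(z:ℝ)^(-(1:ℝ)/(s:ℝ)) := by positivity
          nlinarith [mul_le_mul_of_nonneg_left k2 hB]
    _ = C * (2*(1/Real.log 2 + 1) + (4*(s:ℝ)/(t:ℝ))*(1/Real.log 2))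
          * (z:ℝ)^(-(1:ℝ)/(s:ℝ)) * Real.log z := by ring
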